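/- Let H be a self-adjoint operator (matrix) on a finite-dimensional complex inner product space, and let A_0, A_1, …, A_N be self-adjoint positive-definite operators, with α_1, …, α_N distinct real numbers. Suppose λ ∈ ℂ with λ ∉ {α_1,…,α_N} and there exists ψ ≠ 0 such that H ψ = λ A_0 ψ − Σ_{i=1}^N (λ − α_i)⁻¹ A_i ψ. Then λ is real. -/

import Mathlib

open Finset

/-- Eigenvalues of a Herglotz operator pencil
`M(λ) = H − λ A₀ + Σ (λ − α_i)⁻¹ A_i` with `H` self-adjoint and the `A_i`
self-adjoint positive definite are real. -/
theorem stmt_5 {E : Type*} [NormedAddCommGroup E] [InnerProductSpace ℂ E]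
    [FiniteDimensional ℂ E]
    (N : ℕ) (H A0 : E →ₗ[ℂ] E) (A : Fin N → (E →ₗ[ℂ] E)) (α : Fin N → ℝ)
    (hH : H.IsSymmetric)
    (hA0 : A0.IsSymmetric) (hA0pos : ∀ ψ : E, ψ ≠ 0 → 0 < (inner ℂ ψ (A0 ψ) : ℂ).re)
    (hA : ∀ i, (A i).IsSymmetric)
    (hApos : ∀ i, ∀ ψ : E, ψ ≠ 0 → 0 < (inner ℂ ψ ((A i) ψ) : ℂ).re)
    (hdist : Function.Injective α)
    (lam : ℂ) (hlam : ∀ i, lam ≠ (α i : ℂ))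
    (ψ : E) (hψ : ψ ≠ 0)
    (heq : H ψ = lam • A0 ψ - ∑ i, (lam - (α i : ℂ))⁻¹ • (A i) ψ) :
    lam.im = 0 := by
  have him : ∀ (T : E →ₗ[ℂ] E), T.IsSymmetric → ((inner ℂ ψ (T ψ) : ℂ)).im = 0 := by
    intro T hT
    have h2 : (starRingEnd ℂ) (inner ℂ ψ (T ψ) : ℂ) = (inner ℂ ψ (T ψ) : ℂ) := by
      rw [inner_conj_symm]
      exact hT ψ ψ
    exact Complex.conj_eq_iff_im.mp h2
  have key := congrArg (fun x => (inner ℂ ψ x : ℂ)) heq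
  simp only [inner_sub_right, inner_smul_right, inner_sum] at key
  have keyim := congrArg Complex.im key
  simp only [Complex.sub_im, Complex.mul_im, Complex.im_sum] at keyim
  rw [him H hH, him A0 hA0] at keyim
  have hsum : ∀ i : Fin N, ((lam - (α i : ℂ))⁻¹.re * (inner ℂ ψ ((A i) ψ) : ℂ).im
      + (lam - (α i : ℂ))⁻¹.im * (inner ℂ ψ ((A i) ψ) : ℂ).re)
      = -lam.im / Complex.normSq (lam - (α i : ℂ)) * (inner ℂ ψ ((A i) ψ) : ℂ).re := by
    intro i
    rw [him (A i) (hA i), Complex.inv_im]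
    simp [Complex.sub_im]
  have hs : ∑ i : Fin N, ((lam - (α i : ℂ))⁻¹.re * (inner ℂ ψ ((A i) ψ) : ℂ).im
      + (lam - (α i : ℂ))⁻¹.im * (inner ℂ ψ ((A i) ψ) : ℂ).re)
      = ∑ i : Fin N, -lam.im / Complex.normSq (lam - (α i : ℂ)) * (inner ℂ ψ ((A i) ψ) : ℂ).re :=
    Finset.sum_congr rfl (fun i _ => hsum i)
  simp only [mul_zero, add_zero, zero_add] at keyim
  rw [hs] at keyim
  set b0 := (inner ℂ ψ (A0 ψ) : ℂ).re with hb0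
  have hb0pos : 0 < b0 := hA0pos ψ hψ
  have hfac : 0 = lam.im * (b0 + ∑ i, (inner ℂ ψ ((A i) ψ) : ℂ).re /
      Complex.normSq (lam - (α i : ℂ))) := by
    rw [keyim, mul_add, Finset.mul_sum, sub_eq_add_neg, ← Finset.sum_neg_distrib]
    congr 1
    exact Finset.sum_congr rfl (fun i _ => by ring)
  have hpos : 0 < b0 + ∑ i, (inner ℂ ψ ((A i) ψ) : ℂ).re /
      Complex.normSq (lam - (α i : ℂ)) := by
    apply add_pos_of_pos_of_nonneg hb0pos
    apply Finset.sum_nonneg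
    intro i _
    exact div_nonneg (le_of_lt (hApos i ψ hψ)) (Complex.normSq_nonneg _)
  rcases mul_eq_zero.mp hfac.symm with h | h
  · exact h
  · exact absurd h (ne_of_gt hpos)
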